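/- arXiv:2005.06659 — 2 statements merged into one kernel-verified Lean document; each statement's English description precedes it below -/
import Mathlib

section
/- Every selector-free first-order formula φ in the theory of (co)datatypes can be effectively transformed into a formula φ'' of the extended first-order language of trees (over the signature whose sorts are the (co)datatypes and whose generators are the constructors) that is equisatisfiable with φ: φ is satisfiable in some structure of (co)datatypes if and only if φ'' is satisfiable in the structure 𝒯 of trees. Concretely, φ'' is obtained by relativizing every quantifier over a datatype d to fin (replacing ∃x:d. ψ by ∃x:d. fin(x) ∧ ψ and ∀x:d. ψ by ∀x:d. fin(x) → ψ) and conjoining fin(u) for every free variable u of datatype sort. -/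
set_option linter.unusedVariables false


/-- A many-sorted signature: sorts and generators (function symbols),
each generator `g` having argument sorts `src g` and target sort `tgt g`. -/
structure Sig where
  Srt : Type
  Gen : Type
  tgt : Gen → Srt
  src : Gen → List Srt

namespace Sig

variable (σ : Sig)

/-- The generators of a sort `s`. -/
def Gens (s : σ.Srt) : Set σ.Gen := { g | σ.tgt g = s }

/-- A labeling of positions (lists of natural numbers) by generators is a valid
tree labeling if children exist exactly according to arity and have the right sorts. -/
def IsLabeling (L : List ℕ → Option σ.Gen) : Prop :=
  (∀ p, L p = none → ∀ i, L (p ++ [i]) = none) ∧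
  (∀ p g, L p = some g → ∀ i, ((L (p ++ [i])).isSome ↔ i < (σ.src g).length)) ∧
  (∀ p g i g', L p = some g → L (p ++ [i]) = some g' →
      (σ.src g)[i]? = some (σ.tgt g'))

/-- A (possibly infinite) tree of sort `s`. -/
structure Tree (s : σ.Srt) where
  L : List ℕ → Option σ.Gen
  isLab : σ.IsLabeling L
  root : ∃ g, L [] = some g ∧ σ.tgt g = s

variable {σ}

/-- A tree is finite if it has finitely many nodes. -/
def Tree.IsFinite {s : σ.Srt} (t : σ.Tree s) : Prop :=
  { p : List ℕ | (t.L p).isSome }.Finite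

/-- The tree has depth at most `d`. -/
def Tree.DepthLE {s : σ.Srt} (t : σ.Tree s) (d : ℕ) : Prop :=
  ∀ p, (t.L p).isSome → p.length ≤ d

variable (σ)

/-- Build a tree with root labeled `g` from given immediate subtrees. -/
def build (g : σ.Gen) (c : ∀ i : Fin (σ.src g).length, σ.Tree ((σ.src g).get i)) :
    σ.Tree (σ.tgt g) where
  L := fun p =>
    match p with
    | [] => some g
    | i :: q => if h : i < (σ.src g).length then (c ⟨i, h⟩).L q else none
  isLab := by
    refine ⟨?_, ?_, ?_⟩
    · intro p hp i
      match p with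
      | [] => simp at hp
      | j :: q =>
        simp only [List.cons_append]
        by_cases h : j < (σ.src g).length
        · simp only [dif_pos h] at hp ⊢
          exact (c ⟨j, h⟩).isLab.1 q hp i
        · simp only [dif_neg h]
    · intro p g' hp i
      match p with
      | [] =>
        injection hp with hg
        subst hg
        by_cases h : i < (σ.src g).length
        · simp only [List.nil_append, dif_pos h]
          obtain ⟨g₀, h₀, -⟩ := (c ⟨i, h⟩).root
          simp [h₀, h]
        · simp [List.nil_append, dif_neg h, h]
      | j :: q =>
        by_cases h : j < (σ.src g).length
        · simp only [dif_pos h] at hp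
          simp only [List.cons_append, dif_pos h]
          exact (c ⟨j, h⟩).isLab.2.1 q g' hp i
        · simp only [dif_neg h] at hp
          exact nomatch hp
    · intro p g' i g'' hp hpi
      match p with
      | [] =>
        injection hp with hg
        subst hg
        by_cases h : i < (σ.src g).length
        · simp only [List.nil_append, dif_pos h] at hpi
          obtain ⟨g₀, h₀, htgt⟩ := (c ⟨i, h⟩).root
          rw [h₀, Option.some.injEq] at hpi
          subst hpi
          rw [List.getElem?_eq_getElem h]
          exact congrArg some htgt.symm
        · simp only [List.nil_append, dif_neg h] at hpi
          exact nomatch hpi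
      | j :: q =>
        by_cases h : j < (σ.src g).length
        · simp only [dif_pos h] at hp
          simp only [List.cons_append, dif_pos h] at hpi
          exact (c ⟨j, h⟩).isLab.2.2 q g' i g'' hp hpi
        · simp only [dif_neg h] at hp
          exact nomatch hp
  root := ⟨g, rfl, rfl⟩

/-- Sorts with no infinite trees. -/
def S0I : Set σ.Srt := { s | ∀ t : σ.Tree s, t.IsFinite }
/-- Sorts with no finite trees. -/
def S0F : Set σ.Srt := { s | ∀ t : σ.Tree s, ¬ t.IsFinite }
/-- Sorts with only finitely many finite trees. -/
def SFF : Set σ.Srt := { s | { t : σ.Tree s | t.IsFinite }.Finite }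
/-- Sorts with only finitely many infinite trees. -/
def SFI : Set σ.Srt := { s | { t : σ.Tree s | ¬ t.IsFinite }.Finite }
/-- Sorts with exactly one infinite tree. -/
def S1I : Set σ.Srt := { s | ∃! t : σ.Tree s, ¬ t.IsFinite }

/-- Terms of the (extended) first-order language of trees. Variables are
pairs of a sort and a number. -/
inductive Tm : σ.Srt → Type
  | var (s : σ.Srt) (n : ℕ) : Tm s
  | app (g : σ.Gen) (args : ∀ i : Fin (σ.src g).length, Tm ((σ.src g).get i)) :
      Tm (σ.tgt g)

/-- Valuations assign trees to (sorted) variables. -/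
def Val := ∀ s : σ.Srt, ℕ → σ.Tree s

variable {σ}

/-- Evaluation of a term in the structure of trees under a valuation. -/
def Tm.eval (ρ : σ.Val) : ∀ {s : σ.Srt}, σ.Tm s → σ.Tree s
  | _, .var s n => ρ s n
  | _, .app g args => σ.build g (fun i => (args i).eval ρ)

/-- The (sorted) free variables of a term. -/
def Tm.fv : ∀ {s : σ.Srt}, σ.Tm s → Set ((s : σ.Srt) × ℕ)
  | _, .var s n => {⟨s, n⟩}
  | _, .app _ args => ⋃ i, (args i).fv

/-- A term is flat if it is a variable or a generator applied to variables. -/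
def Tm.IsFlat : ∀ {s : σ.Srt}, σ.Tm s → Prop
  | _, .var _ _ => True
  | _, .app g args => ∀ i : Fin (σ.src g).length, ∃ n, args i = Tm.var ((σ.src g).get i) n

/-- A term of the form `f(z̄)`. -/
def Tm.IsApp : ∀ {s : σ.Srt}, σ.Tm s → Prop
  | _, .var _ _ => False
  | _, .app _ _ => True

open Classical in
/-- Update a valuation at one sorted variable. -/
noncomputable def updV (ρ : σ.Val) (s : σ.Srt) (n : ℕ) (t : σ.Tree s) : σ.Val :=
  fun s' m =>
    if h : s' = s then
      (if m = n then cast (congrArg σ.Tree h.symm) t else ρ s' m)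
    else ρ s' m

variable (σ)

/-- Formulae of the extended first-order language of trees: equality,
the finiteness predicates `fin`, propositional connectives and sorted quantifiers. -/
inductive Fml : Type
  | tru : Fml
  | fls : Fml
  | eq {s : σ.Srt} (a b : σ.Tm s) : Fml
  | fin {s : σ.Srt} (a : σ.Tm s) : Fml
  | not (φ : Fml) : Fml
  | and (φ ψ : Fml) : Fml
  | or (φ ψ : Fml) : Fml
  | imp (φ ψ : Fml) : Fml
  | ex (s : σ.Srt) (n : ℕ) (φ : Fml) : Fml
  | all (s : σ.Srt) (n : ℕ) (φ : Fml) : Fml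

variable {σ}

/-- Satisfaction of a formula in the structure `𝒯` of trees under a valuation. -/
def Fml.Sat (ρ : σ.Val) : σ.Fml → Prop
  | .tru => True
  | .fls => False
  | .eq a b => a.eval ρ = b.eval ρ
  | .fin a => (a.eval ρ).IsFinite
  | .not φ => ¬ φ.Sat ρ
  | .and φ ψ => φ.Sat ρ ∧ ψ.Sat ρ
  | .or φ ψ => φ.Sat ρ ∨ ψ.Sat ρ
  | .imp φ ψ => φ.Sat ρ → ψ.Sat ρ
  | .ex s n φ => ∃ t : σ.Tree s, φ.Sat (updV ρ s n t)
  | .all s n φ => ∀ t : σ.Tree s, φ.Sat (updV ρ s n t)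

/-- The free variables of a formula. -/
def Fml.fv : σ.Fml → Set ((s : σ.Srt) × ℕ)
  | .tru => ∅
  | .fls => ∅
  | .eq a b => a.fv ∪ b.fv
  | .fin a => a.fv
  | .not φ => φ.fv
  | .and φ ψ => φ.fv ∪ ψ.fv
  | .or φ ψ => φ.fv ∪ ψ.fv
  | .imp φ ψ => φ.fv ∪ ψ.fv
  | .ex s n φ => φ.fv \ {⟨s, n⟩}
  | .all s n φ => φ.fv \ {⟨s, n⟩}

/-- Two formulae are equivalent in the extended theory of trees if they are
satisfied by exactly the same valuations. -/
def FmlEquiv (φ ψ : σ.Fml) : Prop := ∀ ρ : σ.Val, φ.Sat ρ ↔ ψ.Sat ρ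

end Sig

/-- A signature of algebraic (co)datatypes: a many-sorted signature whose sorts
are partitioned into datatypes (`isData`) and codatatypes, whose generators are
the constructors; the argument sorts of a constructor of a datatype
(resp. codatatype) are datatypes (resp. codatatypes), each sort has at least one
and finitely many constructors, and every datatype is well-founded (it has a
ground constructor term, i.e. a finite tree). Each constructor `C` comes with
selectors `sel_C^i`, one for each argument position. -/
structure DSig extends Sig where
  isData : Srt → Prop
  mix : ∀ g : Gen, ∀ s ∈ src g, (isData (tgt g) ↔ isData s)
  ctorsNonempty : ∀ s : Srt, ∃ g : Gen, tgt g = s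
  ctorsFinite : ∀ s : Srt, { g : Gen | tgt g = s }.Finite
  wfData : ∀ s : Srt, isData s → ∃ t : toSig.Tree s, t.IsFinite

namespace DSig

variable (σ : DSig)

/-- The domain of a sort in a structure of (co)datatypes: all constructor trees
for a codatatype, the finite constructor trees for a datatype. -/
def Dom (s : σ.Srt) : Type :=
  { t : σ.toSig.Tree s // σ.isData s → t.IsFinite }

/-- The interpretation of a constructor: build a new tree with the given root. -/
def buildD (g : σ.Gen)
    (c : ∀ i : Fin (σ.src g).length, σ.Dom ((σ.src g).get i)) :
    σ.Dom (σ.tgt g) :=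
  ⟨σ.toSig.build g fun i => (c i).1, by
    intro hd
    have hfin : ∀ i : Fin (σ.src g).length, Sig.Tree.IsFinite (c i).1 := fun i =>
      (c i).2 ((σ.mix g _ (List.get_mem _ i)).mp hd)
    have hsub : { p : List ℕ | ((σ.toSig.build g fun i => (c i).1).L p).isSome } ⊆
        insert [] (⋃ i : Fin (σ.src g).length,
          (List.cons i.1) '' { q : List ℕ | (((c i).1).L q).isSome }) := by
      intro p hp
      match p with
      | [] => exact Set.mem_insert _ _
      | j :: q =>
        have hp' : (if h : j < (σ.src g).length then ((c ⟨j, h⟩).1).L q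
            else none).isSome := hp
        by_cases h : j < (σ.src g).length
        · rw [dif_pos h] at hp'
          exact Set.mem_insert_iff.mpr (Or.inr (Set.mem_iUnion.mpr
            ⟨⟨j, h⟩, ⟨q, hp', rfl⟩⟩))
        · rw [dif_neg h] at hp'
          exact absurd hp' (by simp)
    exact Set.Finite.subset
      (Set.Finite.insert _ (Set.finite_iUnion fun i => (hfin i).image _)) hsub⟩

/-- Terms of the first-order language of (co)datatypes: variables, constructor
applications and selector applications (`sel g i` is the `i`-th selector of the
constructor `g`). -/
inductive DTm : σ.Srt → Type
  | var (s : σ.Srt) (n : ℕ) : DTm s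
  | ctor (g : σ.Gen)
      (args : ∀ i : Fin (σ.src g).length, DTm ((σ.src g).get i)) : DTm (σ.tgt g)
  | sel (g : σ.Gen) (i : Fin (σ.src g).length) (t : DTm (σ.tgt g)) :
      DTm ((σ.src g).get i)

/-- A structure of (co)datatypes (standard selector semantics): the domains and
the constructor interpretations are fixed, and the selectors are arbitrary
functions satisfying `sel_C^i (C(t₁, …, tₙ)) = tᵢ`. -/
structure DStruct where
  sel : ∀ (g : σ.Gen) (i : Fin (σ.src g).length),
      σ.Dom (σ.tgt g) → σ.Dom ((σ.src g).get i)
  sel_spec : ∀ (g : σ.Gen) (i : Fin (σ.src g).length)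
      (c : ∀ j : Fin (σ.src g).length, σ.Dom ((σ.src g).get j)),
      sel g i (σ.buildD g c) = c i

/-- Valuations in a structure of (co)datatypes. -/
def DVal := ∀ s : σ.Srt, ℕ → σ.Dom s

variable {σ}

/-- Evaluation of a term in a structure of (co)datatypes under a valuation. -/
def DTm.eval (M : σ.DStruct) (ρ : σ.DVal) : ∀ {s : σ.Srt}, σ.DTm s → σ.Dom s
  | _, .var s n => ρ s n
  | _, .ctor g args => σ.buildD g fun i => (args i).eval M ρ
  | _, .sel g i t => M.sel g i (t.eval M ρ)

/-- A term is selector-free. -/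
def DTm.SelFree : ∀ {s : σ.Srt}, σ.DTm s → Prop
  | _, .var _ _ => True
  | _, .ctor _ args => ∀ i, (args i).SelFree
  | _, .sel _ _ _ => False

/-- The (sorted) free variables of a term. -/
def DTm.fv : ∀ {s : σ.Srt}, σ.DTm s → Set ((s : σ.Srt) × ℕ)
  | _, .var s n => {⟨s, n⟩}
  | _, .ctor _ args => ⋃ i, (args i).fv
  | _, .sel _ _ t => t.fv

open Classical in
/-- Update a valuation at one sorted variable. -/
noncomputable def updD (ρ : σ.DVal) (s : σ.Srt) (n : ℕ) (t : σ.Dom s) : σ.DVal :=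
  fun s' m =>
    if h : s' = s then
      (if m = n then cast (congrArg σ.Dom h.symm) t else ρ s' m)
    else ρ s' m

variable (σ)

/-- Formulae of the first-order language of (co)datatypes. -/
inductive DFml : Type
  | eq {s : σ.Srt} (a b : σ.DTm s) : DFml
  | not (φ : DFml) : DFml
  | and (φ ψ : DFml) : DFml
  | or (φ ψ : DFml) : DFml
  | imp (φ ψ : DFml) : DFml
  | ex (s : σ.Srt) (n : ℕ) (φ : DFml) : DFml
  | all (s : σ.Srt) (n : ℕ) (φ : DFml) : DFml

variable {σ}

/-- Satisfaction of a formula in a structure of (co)datatypes. -/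
def DFml.Sat (M : σ.DStruct) (ρ : σ.DVal) : σ.DFml → Prop
  | .eq a b => a.eval M ρ = b.eval M ρ
  | .not φ => ¬ φ.Sat M ρ
  | .and φ ψ => φ.Sat M ρ ∧ ψ.Sat M ρ
  | .or φ ψ => φ.Sat M ρ ∨ ψ.Sat M ρ
  | .imp φ ψ => φ.Sat M ρ → ψ.Sat M ρ
  | .ex s n φ => ∃ t : σ.Dom s, φ.Sat M (updD ρ s n t)
  | .all s n φ => ∀ t : σ.Dom s, φ.Sat M (updD ρ s n t)

/-- A formula is selector-free. -/
def DFml.SelFree : σ.DFml → Prop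
  | .eq a b => a.SelFree ∧ b.SelFree
  | .not φ => φ.SelFree
  | .and φ ψ => φ.SelFree ∧ ψ.SelFree
  | .or φ ψ => φ.SelFree ∧ ψ.SelFree
  | .imp φ ψ => φ.SelFree ∧ ψ.SelFree
  | .ex _ _ φ => φ.SelFree
  | .all _ _ φ => φ.SelFree

/-- A formula is quantifier-free. -/
def DFml.QFree : σ.DFml → Prop
  | .eq _ _ => True
  | .not φ => φ.QFree
  | .and φ ψ => φ.QFree ∧ ψ.QFree
  | .or φ ψ => φ.QFree ∧ ψ.QFree
  | .imp φ ψ => φ.QFree ∧ ψ.QFree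
  | .ex _ _ _ => False
  | .all _ _ _ => False

/-- The free variables of a formula. -/
def DFml.fv : σ.DFml → Set ((s : σ.Srt) × ℕ)
  | .eq a b => a.fv ∪ b.fv
  | .not φ => φ.fv
  | .and φ ψ => φ.fv ∪ ψ.fv
  | .or φ ψ => φ.fv ∪ ψ.fv
  | .imp φ ψ => φ.fv ∪ ψ.fv
  | .ex s n φ => φ.fv \ {⟨s, n⟩}
  | .all s n φ => φ.fv \ {⟨s, n⟩}

end DSig

/-- Translation of selector-free (co)datatype terms into terms of the language of
trees (selector subterms, which do not occur in selector-free terms, are mapped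
to a dummy variable). -/
def toTm (σ : DSig) : ∀ {s : σ.Srt}, σ.DTm s → σ.toSig.Tm s
  | _, .var s n => .var s n
  | _, .ctor g args => .app g fun i => toTm σ (args i)
  | _, .sel g i _ => .var ((σ.src g).get i) 0

open Classical in
/-- The relativization transformation: every quantifier over a datatype `d` is
relativized to `fin` (replacing `∃x:d. ψ` by `∃x:d. fin(x) ∧ ψ` and `∀x:d. ψ` by
`∀x:d. fin(x) → ψ`). -/
noncomputable def relFin (σ : DSig) : σ.DFml → σ.toSig.Fml
  | .eq a b => .eq (toTm σ a) (toTm σ b)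
  | .not φ => .not (relFin σ φ)
  | .and φ ψ => .and (relFin σ φ) (relFin σ ψ)
  | .or φ ψ => .or (relFin σ φ) (relFin σ ψ)
  | .imp φ ψ => .imp (relFin σ φ) (relFin σ ψ)
  | .ex s n φ =>
      if σ.isData s then .ex s n (.and (.fin (.var s n)) (relFin σ φ))
      else .ex s n (relFin σ φ)
  | .all s n φ =>
      if σ.isData s then .all s n (.imp (.fin (.var s n)) (relFin σ φ))
      else .all s n (relFin σ φ)

section Aux

open Classical

/-- Extensionality for trees: equal labelings give equal trees. -/
lemma Sig.Tree.ext' {σ : Sig} {s : σ.Srt} {t₁ t₂ : σ.Tree s} (h : t₁.L = t₂.L) :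
    t₁ = t₂ := by
  cases t₁; cases t₂; cases h; rfl

lemma Sig.build_L_cons {σ : Sig} (g : σ.Gen)
    (c : ∀ i : Fin (σ.src g).length, σ.Tree ((σ.src g).get i))
    (i : Fin (σ.src g).length) (q : List ℕ) :
    (σ.build g c).L (i.1 :: q) = (c i).L q := by
  show (if h : i.1 < (σ.src g).length then (c ⟨i.1, h⟩).L q else none) = _
  rw [dif_pos i.2]

lemma DSig.buildD_inj {σ : DSig} (g : σ.Gen)
    {c c' : ∀ i : Fin (σ.src g).length, σ.Dom ((σ.src g).get i)}
    (h : σ.buildD g c = σ.buildD g c') : c = c' := by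
  have hL : (σ.toSig.build g fun i => (c i).1).L =
      (σ.toSig.build g fun i => (c' i).1).L := congrArg (fun d => d.1.L) h
  funext i
  apply Subtype.ext
  apply Sig.Tree.ext'
  funext q
  have := congrFun hL (i.1 :: q)
  rwa [Sig.build_L_cons, Sig.build_L_cons] at this

/-- A canonical constructor of each sort. -/
noncomputable def DSig.pick (σ : DSig) (s : σ.Srt) : σ.Gen :=
  (σ.ctorsNonempty s).choose

lemma DSig.pick_tgt (σ : DSig) (s : σ.Srt) : σ.tgt (σ.pick s) = s :=
  (σ.ctorsNonempty s).choose_spec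

/-- The labeling of a canonical (possibly infinite) tree of each sort. -/
noncomputable def DSig.arbL (σ : DSig) : σ.Srt → List ℕ → Option σ.Gen
  | s, [] => some (σ.pick s)
  | s, (i :: q) =>
      if h : i < (σ.src (σ.pick s)).length then
        σ.arbL ((σ.src (σ.pick s)).get ⟨i, h⟩) q
      else none

lemma DSig.arbL_isLab (σ : DSig) (s : σ.Srt) : σ.toSig.IsLabeling (σ.arbL s) := by
  refine ⟨?_, ?_, ?_⟩
  · intro p
    induction p generalizing s with
    | nil => intro hp; simp [DSig.arbL] at hp
    | cons j q ih =>
      intro hp i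
      simp only [DSig.arbL, List.cons_append] at hp ⊢
      by_cases h : j < (σ.src (σ.pick s)).length
      · rw [dif_pos h] at hp ⊢; exact ih _ hp i
      · rw [dif_neg h]
  · intro p
    induction p generalizing s with
    | nil =>
      intro g hp i
      simp only [DSig.arbL] at hp
      injection hp with hg; subst hg
      simp only [List.nil_append, DSig.arbL]
      by_cases h : i < (σ.src (σ.pick s)).length
      · simp [dif_pos h, h, DSig.arbL]
      · simp [dif_neg h, h]
    | cons j q ih =>
      intro g hp i
      simp only [DSig.arbL, List.cons_append] at hp ⊢
      by_cases h : j < (σ.src (σ.pick s)).length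
      · rw [dif_pos h] at hp ⊢; exact ih _ g hp i
      · rw [dif_neg h] at hp; exact nomatch hp
  · intro p
    induction p generalizing s with
    | nil =>
      intro g i g' hp hpi
      simp only [DSig.arbL] at hp
      injection hp with hg; subst hg
      simp only [List.nil_append, DSig.arbL] at hpi
      by_cases h : i < (σ.src (σ.pick s)).length
      · rw [dif_pos h] at hpi
        injection hpi with hg'; subst hg'
        rw [List.getElem?_eq_getElem h, DSig.pick_tgt]
        rfl
      · rw [dif_neg h] at hpi; exact nomatch hpi
    | cons j q ih =>
      intro g i g' hp hpi
      simp only [DSig.arbL, List.cons_append] at hp hpi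
      by_cases h : j < (σ.src (σ.pick s)).length
      · rw [dif_pos h] at hp hpi; exact ih _ g i g' hp hpi
      · rw [dif_neg h] at hp; exact nomatch hp

/-- A canonical tree of each sort. -/
noncomputable def DSig.arbTree (σ : DSig) (s : σ.Srt) : σ.toSig.Tree s where
  L := σ.arbL s
  isLab := σ.arbL_isLab s
  root := ⟨σ.pick s, rfl, σ.pick_tgt s⟩

/-- Every domain is nonempty. -/
lemma DSig.dom_nonempty (σ : DSig) (s : σ.Srt) : Nonempty (σ.Dom s) := by
  by_cases h : σ.isData s
  · obtain ⟨t, ht⟩ := σ.wfData s h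
    exact ⟨⟨t, fun _ => ht⟩⟩
  · exact ⟨⟨σ.arbTree s, fun hd => absurd hd h⟩⟩

/-- A structure of (co)datatypes over any signature. -/
noncomputable def DSig.defaultStruct (σ : DSig) : σ.DStruct where
  sel g i t :=
    if h : ∃ c, σ.buildD g c = t then h.choose i
    else Classical.choice (σ.dom_nonempty _)
  sel_spec g i c := by
    have h : ∃ c', σ.buildD g c' = σ.buildD g c := ⟨c, rfl⟩
    simp only [dif_pos h]
    exact congrFun (σ.buildD_inj g h.choose_spec) i

/-- Forgetting finiteness proofs in a (co)datatype valuation. -/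
noncomputable def DSig.toVal {σ : DSig} (ρ : σ.DVal) : σ.toSig.Val :=
  fun s n => (ρ s n).1

lemma DSig.toVal_updD {σ : DSig} (ρ : σ.DVal) (s : σ.Srt) (n : ℕ) (t : σ.Dom s) :
    DSig.toVal (DSig.updD ρ s n t) = Sig.updV (DSig.toVal ρ) s n t.1 := by
  funext s' m
  unfold DSig.toVal DSig.updD Sig.updV
  by_cases h : s' = s
  · subst h
    by_cases hm : m = n <;> simp [hm]
  · simp [h]

lemma Sig.updV_same {σ : Sig} (ρ : σ.Val) (s : σ.Srt) (n : ℕ) (t : σ.Tree s) :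
    Sig.updV ρ s n t s n = t := by
  unfold Sig.updV
  simp

lemma DSig.toTm_eval {σ : DSig} (M : σ.DStruct) (ρ : σ.DVal) :
    ∀ {s : σ.Srt} (a : σ.DTm s), a.SelFree →
      (a.eval M ρ).1 = (toTm σ a).eval (DSig.toVal ρ)
  | _, .var s n, _ => rfl
  | _, .ctor g args, hsf => by
    show (σ.buildD g fun i => (args i).eval M ρ).1 = _
    unfold DSig.buildD
    show σ.toSig.build g (fun i => ((args i).eval M ρ).1) = _
    exact congrArg (σ.toSig.build g)
      (funext fun i => DSig.toTm_eval M ρ (args i) (hsf i))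
  | _, .sel g i t, hsf => absurd hsf not_false

lemma DSig.toTm_fv {σ : DSig} :
    ∀ {s : σ.Srt} (a : σ.DTm s), a.SelFree → (toTm σ a).fv ⊆ a.fv
  | _, .var s n, _ => subset_rfl
  | _, .ctor g args, hsf => by
    show ⋃ i, (toTm σ (args i)).fv ⊆ ⋃ i, (args i).fv
    exact Set.iUnion_mono fun i => DSig.toTm_fv (args i) (hsf i)
  | _, .sel g i t, hsf => absurd hsf not_false

lemma relFin_fv {σ : DSig} (φ : σ.DFml) (hsf : φ.SelFree) :
    (relFin σ φ).fv ⊆ φ.fv := by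
  induction φ with
  | eq a b =>
    exact Set.union_subset_union (DSig.toTm_fv a hsf.1) (DSig.toTm_fv b hsf.2)
  | not φ ih => exact ih hsf
  | and φ ψ ih₁ ih₂ => exact Set.union_subset_union (ih₁ hsf.1) (ih₂ hsf.2)
  | or φ ψ ih₁ ih₂ => exact Set.union_subset_union (ih₁ hsf.1) (ih₂ hsf.2)
  | imp φ ψ ih₁ ih₂ => exact Set.union_subset_union (ih₁ hsf.1) (ih₂ hsf.2)
  | ex s n φ ih =>
    unfold relFin
    by_cases h : σ.isData s <;> simp only [if_pos, if_neg, h, if_true, if_false]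
    · show (({⟨s, n⟩} ∪ (relFin σ φ).fv) \ {⟨s, n⟩} : Set _) ⊆ φ.fv \ {⟨s, n⟩}
      rw [Set.union_diff_distrib, Set.diff_self, Set.empty_union]
      exact Set.diff_subset_diff_left (ih hsf)
    · exact Set.diff_subset_diff_left (ih hsf)
  | all s n φ ih =>
    unfold relFin
    by_cases h : σ.isData s <;> simp only [if_pos, if_neg, h, if_true, if_false]
    · show (({⟨s, n⟩} ∪ (relFin σ φ).fv) \ {⟨s, n⟩} : Set _) ⊆ φ.fv \ {⟨s, n⟩}
      rw [Set.union_diff_distrib, Set.diff_self, Set.empty_union]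
      exact Set.diff_subset_diff_left (ih hsf)
    · exact Set.diff_subset_diff_left (ih hsf)

lemma Sig.Tm.eval_congr {σ : Sig} {ρ₁ ρ₂ : σ.Val} :
    ∀ {s : σ.Srt} (a : σ.Tm s), (∀ x ∈ a.fv, ρ₁ x.1 x.2 = ρ₂ x.1 x.2) →
      a.eval ρ₁ = a.eval ρ₂
  | _, .var s n, h => h ⟨s, n⟩ rfl
  | _, .app g args, h =>
    congrArg (σ.build g) (funext fun i => Sig.Tm.eval_congr (args i)
      (fun x hx => h x (Set.mem_iUnion.mpr ⟨i, hx⟩)))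

lemma Sig.Fml.sat_congr {σ : Sig} (φ : σ.Fml) :
    ∀ {ρ₁ ρ₂ : σ.Val}, (∀ x ∈ φ.fv, ρ₁ x.1 x.2 = ρ₂ x.1 x.2) →
      (φ.Sat ρ₁ ↔ φ.Sat ρ₂) := by
  induction φ with
  | tru => intro _ _ _; exact Iff.rfl
  | fls => intro _ _ _; exact Iff.rfl
  | eq a b =>
    intro ρ₁ ρ₂ h
    show a.eval ρ₁ = b.eval ρ₁ ↔ a.eval ρ₂ = b.eval ρ₂
    rw [Sig.Tm.eval_congr a fun x hx => h x (Or.inl hx),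
      Sig.Tm.eval_congr b fun x hx => h x (Or.inr hx)]
  | fin a =>
    intro ρ₁ ρ₂ h
    show (a.eval ρ₁).IsFinite ↔ (a.eval ρ₂).IsFinite
    rw [Sig.Tm.eval_congr a h]
  | not φ ih => intro ρ₁ ρ₂ h; exact not_congr (ih h)
  | and φ ψ ih₁ ih₂ =>
    intro ρ₁ ρ₂ h
    exact and_congr (ih₁ fun x hx => h x (Or.inl hx)) (ih₂ fun x hx => h x (Or.inr hx))
  | or φ ψ ih₁ ih₂ =>
    intro ρ₁ ρ₂ h
    exact or_congr (ih₁ fun x hx => h x (Or.inl hx)) (ih₂ fun x hx => h x (Or.inr hx))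
  | imp φ ψ ih₁ ih₂ =>
    intro ρ₁ ρ₂ h
    exact imp_congr (ih₁ fun x hx => h x (Or.inl hx)) (ih₂ fun x hx => h x (Or.inr hx))
  | ex s n φ ih =>
    intro ρ₁ ρ₂ h
    refine exists_congr fun t => ih fun x hx => ?_
    unfold Sig.updV
    by_cases hs : x.1 = s
    · by_cases hm : x.2 = n
      · simp [hs, hm]
      · simp only [hs, dif_pos, if_neg hm]
        exact h x ⟨hx, by rintro rfl; exact hm rfl⟩
    · simp only [dif_neg hs]
      exact h x ⟨hx, by rintro rfl; exact hs rfl⟩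
  | all s n φ ih =>
    intro ρ₁ ρ₂ h
    refine forall_congr' fun t => ih fun x hx => ?_
    unfold Sig.updV
    by_cases hs : x.1 = s
    · by_cases hm : x.2 = n
      · simp [hs, hm]
      · simp only [hs, dif_pos, if_neg hm]
        exact h x ⟨hx, by rintro rfl; exact hm rfl⟩
    · simp only [dif_neg hs]
      exact h x ⟨hx, by rintro rfl; exact hs rfl⟩

/-- Main lemma: satisfaction of a selector-free formula in a structure of
(co)datatypes corresponds to satisfaction of its relativization in `𝒯`. -/
lemma sat_relFin {σ : DSig} (M : σ.DStruct) (φ : σ.DFml) (hsf : φ.SelFree) :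
    ∀ ρ : σ.DVal, φ.Sat M ρ ↔ (relFin σ φ).Sat (DSig.toVal ρ) := by
  induction φ with
  | eq a b =>
    intro ρ
    show a.eval M ρ = b.eval M ρ ↔ _
    rw [show ((relFin σ (.eq a b)).Sat (DSig.toVal ρ)) =
      ((toTm σ a).eval (DSig.toVal ρ) = (toTm σ b).eval (DSig.toVal ρ)) from rfl]
    rw [← DSig.toTm_eval M ρ a hsf.1, ← DSig.toTm_eval M ρ b hsf.2]
    exact ⟨fun h => congrArg Subtype.val h, fun h => Subtype.ext h⟩
  | not φ ih => intro ρ; exact not_congr (ih hsf ρ)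
  | and φ ψ ih₁ ih₂ => intro ρ; exact and_congr (ih₁ hsf.1 ρ) (ih₂ hsf.2 ρ)
  | or φ ψ ih₁ ih₂ => intro ρ; exact or_congr (ih₁ hsf.1 ρ) (ih₂ hsf.2 ρ)
  | imp φ ψ ih₁ ih₂ => intro ρ; exact imp_congr (ih₁ hsf.1 ρ) (ih₂ hsf.2 ρ)
  | ex s n φ ih =>
    intro ρ
    show (∃ t : σ.Dom s, φ.Sat M (DSig.updD ρ s n t)) ↔ _
    unfold relFin
    by_cases h : σ.isData s
    · rw [if_pos h]
      show _ ↔ ∃ t : σ.toSig.Tree s,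
        ((Sig.Tm.var s n).eval (Sig.updV (DSig.toVal ρ) s n t)).IsFinite ∧
          (relFin σ φ).Sat (Sig.updV (DSig.toVal ρ) s n t)
      constructor
      · rintro ⟨t, ht⟩
        refine ⟨t.1, ?_, ?_⟩
        · show (Sig.updV (DSig.toVal ρ) s n t.1 s n).IsFinite
          rw [Sig.updV_same]; exact t.2 h
        · rw [← DSig.toVal_updD]; exact (ih hsf _).mp ht
      · rintro ⟨t, ht1, ht2⟩
        rw [show (Sig.Tm.var s n).eval (Sig.updV (DSig.toVal ρ) s n t) =
            Sig.updV (DSig.toVal ρ) s n t s n from rfl, Sig.updV_same] at ht1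
        refine ⟨⟨t, fun _ => ht1⟩, (ih hsf _).mpr ?_⟩
        rw [DSig.toVal_updD ρ s n (⟨t, fun _ => ht1⟩ : σ.Dom s)]; exact ht2
    · rw [if_neg h]
      show _ ↔ ∃ t : σ.toSig.Tree s, (relFin σ φ).Sat (Sig.updV (DSig.toVal ρ) s n t)
      constructor
      · rintro ⟨t, ht⟩
        refine ⟨t.1, ?_⟩
        rw [← DSig.toVal_updD]; exact (ih hsf _).mp ht
      · rintro ⟨t, ht⟩
        refine ⟨⟨t, fun hd => absurd hd h⟩, (ih hsf _).mpr ?_⟩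
        rw [DSig.toVal_updD ρ s n (⟨t, fun hd => absurd hd h⟩ : σ.Dom s)]; exact ht
  | all s n φ ih =>
    intro ρ
    show (∀ t : σ.Dom s, φ.Sat M (DSig.updD ρ s n t)) ↔ _
    unfold relFin
    by_cases h : σ.isData s
    · rw [if_pos h]
      show _ ↔ ∀ t : σ.toSig.Tree s,
        ((Sig.Tm.var s n).eval (Sig.updV (DSig.toVal ρ) s n t)).IsFinite →
          (relFin σ φ).Sat (Sig.updV (DSig.toVal ρ) s n t)
      constructor
      · intro H t ht1
        rw [show (Sig.Tm.var s n).eval (Sig.updV (DSig.toVal ρ) s n t) =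
            Sig.updV (DSig.toVal ρ) s n t s n from rfl, Sig.updV_same] at ht1
        have := (ih hsf _).mp (H ⟨t, fun _ => ht1⟩)
        rwa [DSig.toVal_updD ρ s n (⟨t, fun _ => ht1⟩ : σ.Dom s)] at this
      · intro H t
        refine (ih hsf _).mpr ?_
        rw [DSig.toVal_updD]
        refine H t.1 ?_
        show (Sig.updV (DSig.toVal ρ) s n t.1 s n).IsFinite
        rw [Sig.updV_same]; exact t.2 h
    · rw [if_neg h]
      show _ ↔ ∀ t : σ.toSig.Tree s, (relFin σ φ).Sat (Sig.updV (DSig.toVal ρ) s n t)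
      constructor
      · intro H t
        have := (ih hsf _).mp (H ⟨t, fun hd => absurd hd h⟩)
        rwa [DSig.toVal_updD ρ s n (⟨t, fun hd => absurd hd h⟩ : σ.Dom s)] at this
      · intro H t
        refine (ih hsf _).mpr ?_
        rw [DSig.toVal_updD]
        exact H t.1

end Aux

/-- Every selector-free formula `φ` of the theory of
(co)datatypes is equisatisfiable with the formula `φ''` of the extended language
of trees obtained by relativizing every quantifier over a datatype to `fin` and
conjoining `fin(u)` for every free variable `u` of datatype sort (the conjoined
constraints are expressed semantically: the satisfying valuation must assign
finite trees to the free variables of datatype sorts): `φ` is satisfiable in some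
structure of (co)datatypes iff `φ''` is satisfiable in the structure `𝒯` of
trees. -/
theorem codatatypes_to_trees (σ : DSig) (φ : σ.DFml) (hsf : φ.SelFree) :
    (∃ (M : σ.DStruct) (ρ : σ.DVal), DSig.DFml.Sat M ρ φ) ↔
    (∃ ρ : σ.toSig.Val,
      (∀ x ∈ φ.fv, σ.isData x.1 → Sig.Tree.IsFinite (ρ x.1 x.2)) ∧
      Sig.Fml.Sat ρ (relFin σ φ)) := by
  constructor
  · rintro ⟨M, ρ, hρ⟩
    refine ⟨DSig.toVal ρ, fun x _ hd => (ρ x.1 x.2).2 hd, ?_⟩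
    exact (sat_relFin M φ hsf ρ).mp hρ
  · rintro ⟨ρ, hfv, hρ⟩
    classical
    refine ⟨σ.defaultStruct, fun s n =>
      if h : σ.isData s → (ρ s n).IsFinite then ⟨ρ s n, h⟩
      else Classical.choice (σ.dom_nonempty s), ?_⟩
    set ρD : σ.DVal := fun s n =>
      if h : σ.isData s → (ρ s n).IsFinite then ⟨ρ s n, h⟩
      else Classical.choice (σ.dom_nonempty s) with hρD
    refine (sat_relFin σ.defaultStruct φ hsf ρD).mpr ?_
    refine (Sig.Fml.sat_congr (relFin σ φ) (ρ₂ := ρ) fun x hx => ?_).mpr hρ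
    have hxfv : x ∈ φ.fv := relFin_fv φ hsf hx
    have h : σ.isData x.1 → (ρ x.1 x.2).IsFinite := hfv x hxfv
    show (ρD x.1 x.2).1 = ρ x.1 x.2
    rw [hρD]
    exact congrArg Subtype.val (dif_pos h)
end

section
/- Assume every sort has at least two generators. Let s be a sort with at least one but only finitely many infinite trees, and let S_1I be the set of sorts having exactly one infinite tree. Then every infinite tree of sort s is the value of a finite term built from the generators whose variables are among { u_{s'} | s' ∈ S_1I }, under the valuation sending each variable u_{s'} to the unique infinite tree of sort s'. -/
set_option linter.unusedVariables false


namespace Sig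

variable {σ : Sig}

theorem Tree.ext'_s10 {s : σ.Srt} {t u : σ.Tree s} (h : t.L = u.L) : t = u := by
  cases t; cases u; cases h; rfl

/-- Change the sort index of a tree along an equality of sorts. -/
def Tree.retype {s s' : σ.Srt} (t : σ.Tree s) (h : s = s') : σ.Tree s' :=
  ⟨t.L, t.isLab, h ▸ t.root⟩

theorem L_append_none {s : σ.Srt} (t : σ.Tree s) {p : List ℕ} (h : t.L p = none)
    (q : List ℕ) : t.L (p ++ q) = none := by
  induction q generalizing p with
  | nil => simpa using h
  | cons i q ih =>
    have h1 : t.L (p ++ [i]) = none := t.isLab.1 p h i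
    have h2 : t.L ((p ++ [i]) ++ q) = none := ih h1
    simpa using h2

/-- The `i`-th immediate subtree. -/
def Tree.subAt {s : σ.Srt} (t : σ.Tree s) {g : σ.Gen} (hg : t.L [] = some g)
    (i : Fin (σ.src g).length) : σ.Tree ((σ.src g).get i) where
  L := fun q => t.L ((i : ℕ) :: q)
  isLab :=
    ⟨fun p hp j => t.isLab.1 ((i : ℕ) :: p) hp j,
     fun p g' hp j => t.isLab.2.1 ((i : ℕ) :: p) g' hp j,
     fun p g' j g'' hp hpj => t.isLab.2.2 ((i : ℕ) :: p) g' j g'' hp hpj⟩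
  root := by
    have h1 : (t.L [(i : ℕ)]).isSome := (t.isLab.2.1 [] g hg (i : ℕ)).2 i.isLt
    obtain ⟨g', hg'⟩ := Option.isSome_iff_exists.mp h1
    refine ⟨g', hg', ?_⟩
    have h2 := t.isLab.2.2 [] g (i : ℕ) g' hg hg'
    rw [List.getElem?_eq_getElem i.isLt] at h2
    injection h2 with h2
    simpa [List.get_eq_getElem] using h2.symm

theorem subAt_L {s : σ.Srt} (t : σ.Tree s) {g : σ.Gen} (hg : t.L [] = some g)
    (i : Fin (σ.src g).length) (q : List ℕ) :
    (t.subAt hg i).L q = t.L ((i : ℕ) :: q) := rfl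

theorem build_L_nil (g : σ.Gen) (c : ∀ i : Fin (σ.src g).length, σ.Tree ((σ.src g).get i)) :
    (σ.build g c).L [] = some g := rfl

theorem build_L_cons_s10 (g : σ.Gen) (c : ∀ i : Fin (σ.src g).length, σ.Tree ((σ.src g).get i))
    (i : ℕ) (q : List ℕ) :
    (σ.build g c).L (i :: q) =
      if h : i < (σ.src g).length then (c ⟨i, h⟩).L q else none := rfl

theorem L_out_of_range {s : σ.Srt} (t : σ.Tree s) {g : σ.Gen} (hg : t.L [] = some g)
    {i : ℕ} (hi : ¬ i < (σ.src g).length) (q : List ℕ) : t.L (i :: q) = none := by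
  have h1 : t.L [i] = none := by
    have h2 := t.isLab.2.1 [] g hg i
    rcases hL : t.L [i] with _ | g'
    · rfl
    · exact absurd (h2.1 (by simp [hL])) hi
  simpa using L_append_none t h1 q

theorem build_sub {s : σ.Srt} (t : σ.Tree s) {g : σ.Gen} (hg : t.L [] = some g) :
    (σ.build g (fun i => t.subAt hg i)).L = t.L := by
  funext p
  cases p with
  | nil => simpa [build_L_nil] using hg.symm
  | cons i q =>
    rw [build_L_cons_s10]
    by_cases h : i < (σ.src g).length
    · simp [h, subAt_L]
    · simp [h, L_out_of_range t hg h q]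

/-- η-expansion of a tree at its root. -/
theorem eta {g : σ.Gen} (t : σ.Tree (σ.tgt g)) (hg : t.L [] = some g) :
    σ.build g (fun i => t.subAt hg i) = t :=
  Tree.ext'_s10 (build_sub t hg)

theorem subAt_finite {s : σ.Srt} (t : σ.Tree s) {g : σ.Gen} (hg : t.L [] = some g)
    (i : Fin (σ.src g).length) (ht : t.IsFinite) : (t.subAt hg i).IsFinite := by
  have hinj : Function.Injective (fun q : List ℕ => (i : ℕ) :: q) := by
    intro a b hab; simpa using hab
  have : { q : List ℕ | ((t.subAt hg i).L q).isSome } =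
      (fun q : List ℕ => (i : ℕ) :: q) ⁻¹' { p : List ℕ | (t.L p).isSome } := rfl
  rw [Tree.IsFinite, this]
  exact ht.preimage (hinj.injOn)

theorem exists_infinite_child {s : σ.Srt} {g : σ.Gen} (t : σ.Tree s) (hg : t.L [] = some g)
    (ht : ¬ t.IsFinite) : ∃ i : Fin (σ.src g).length, ¬ (t.subAt hg i).IsFinite := by
  by_contra h
  push_neg at h
  apply ht
  have hsub : { p : List ℕ | (t.L p).isSome } ⊆
      {([] : List ℕ)} ∪ ⋃ i : Fin (σ.src g).length,
        (fun q : List ℕ => (i : ℕ) :: q) '' { q : List ℕ | ((t.subAt hg i).L q).isSome } := by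
    intro p hp
    match p with
    | [] => exact Or.inl rfl
    | j :: q =>
      right
      have hj : j < (σ.src g).length := by
        by_contra hj
        rw [Set.mem_setOf_eq, L_out_of_range t hg hj q] at hp
        simp at hp
      exact Set.mem_iUnion.2 ⟨⟨j, hj⟩, ⟨q, hp, rfl⟩⟩
  exact Set.Finite.subset
    ((Set.finite_singleton _).union (Set.finite_iUnion fun i => (h i).image _)) hsub

theorem finite_of_arity_zero {g : σ.Gen} (t : σ.Tree (σ.tgt g)) (hg : t.L [] = some g)
    (harity : (σ.src g).length = 0) : t.IsFinite := by
  have : { p : List ℕ | (t.L p).isSome } ⊆ {([] : List ℕ)} := by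
    intro p hp
    match p with
    | [] => rfl
    | j :: q =>
      rw [Set.mem_setOf_eq, L_out_of_range t hg (by omega) q] at hp
      simp at hp
  exact Set.Finite.subset (Set.finite_singleton _) this

/-- A canonical labeling obtained by using the generator `c s` at every node. -/
def defL (c : σ.Srt → σ.Gen) : σ.Srt → List ℕ → Option σ.Gen
  | s, [] => some (c s)
  | s, i :: p =>
      if h : i < (σ.src (c s)).length then defL c ((σ.src (c s)).get ⟨i, h⟩) p else none

theorem defL_none (c : σ.Srt → σ.Gen) {s : σ.Srt} {p : List ℕ} (h : defL c s p = none) (i : ℕ) :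
    defL c s (p ++ [i]) = none := by
  induction p generalizing s with
  | nil => simp [defL] at h
  | cons j q ih =>
    rw [List.cons_append]
    rw [defL] at h ⊢
    by_cases hj : j < (σ.src (c s)).length
    · rw [dif_pos hj] at h ⊢; exact ih h
    · rw [dif_neg hj]

theorem defL_isSome (c : σ.Srt → σ.Gen) {s : σ.Srt} {p : List ℕ} {g : σ.Gen} (h : defL c s p = some g) (i : ℕ) :
    (defL c s (p ++ [i])).isSome ↔ i < (σ.src g).length := by
  induction p generalizing s with
  | nil =>
    rw [defL] at h
    injection h with h; subst h
    show (defL c s ([i] : List ℕ)).isSome ↔ _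
    rw [defL]
    by_cases hi : i < (σ.src (c s)).length
    · simp [dif_pos hi, defL, hi]
    · simp [dif_neg hi, hi]
  | cons j q ih =>
    rw [defL] at h
    by_cases hj : j < (σ.src (c s)).length
    · rw [dif_pos hj] at h
      rw [List.cons_append, defL, dif_pos hj]
      exact ih h
    · rw [dif_neg hj] at h; exact absurd h (by simp)

theorem defL_sorts (c : σ.Srt → σ.Gen) (hc : ∀ s, σ.tgt (c s) = s) {s : σ.Srt} {p : List ℕ} {g g' : σ.Gen} (i : ℕ)
    (h : defL c s p = some g) (h' : defL c s (p ++ [i]) = some g') :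
    (σ.src g)[i]? = some (σ.tgt g') := by
  induction p generalizing s with
  | nil =>
    rw [defL] at h
    injection h with h; subst h
    rw [show ([] : List ℕ) ++ [i] = i :: [] from rfl, defL] at h'
    by_cases hi : i < (σ.src (c s)).length
    · rw [dif_pos hi, defL] at h'
      injection h' with h'; subst h'
      rw [List.getElem?_eq_getElem hi, hc]
      rfl
    · rw [dif_neg hi] at h'; exact absurd h' (by simp)
  | cons j q ih =>
    rw [defL] at h
    rw [List.cons_append, defL] at h'
    by_cases hj : j < (σ.src (c s)).length
    · rw [dif_pos hj] at h h'
      exact ih h h'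
    · rw [dif_neg hj] at h; exact absurd h (by simp)

/-- The canonical tree of sort `s`. -/
def defTree (c : σ.Srt → σ.Gen) (hc : ∀ s, σ.tgt (c s) = s) (s : σ.Srt) : σ.Tree s where
  L := defL c s
  isLab := ⟨fun p h i => defL_none c h i, fun p g h i => defL_isSome c h i,
    fun p g i g' h h' => defL_sorts c hc i h h'⟩
  root := ⟨c s, rfl, hc s⟩

theorem exists_choice (htwo : ∀ s : σ.Srt, (σ.Gens s).Nontrivial) :
    ∃ c : σ.Srt → σ.Gen, ∀ s, σ.tgt (c s) = s := by
  choose c hc using fun s => (htwo s).nonempty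
  exact ⟨c, hc⟩

/-- Every sort has at least two distinct trees. -/
theorem two_trees (htwo : ∀ s : σ.Srt, (σ.Gens s).Nontrivial) (s : σ.Srt) :
    ∃ t₁ t₂ : σ.Tree s, t₁ ≠ t₂ := by
  obtain ⟨c, hc⟩ := exists_choice htwo
  obtain ⟨g₁, hg₁, g₂, hg₂, hne⟩ := htwo s
  refine ⟨(σ.build g₁ (fun i => defTree c hc _)).retype hg₁,
          (σ.build g₂ (fun i => defTree c hc _)).retype hg₂, ?_⟩
  intro h
  have h1 := congrArg (fun t : σ.Tree s => t.L []) h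
  simp only [Tree.retype, build_L_nil] at h1
  exact hne (by injection h1)

/-- Replace the `i`-th immediate subtree of `t` by `t'`. -/
noncomputable def replace {g : σ.Gen} (t : σ.Tree (σ.tgt g)) (hg : t.L [] = some g)
    (i : Fin (σ.src g).length) (t' : σ.Tree ((σ.src g).get i)) : σ.Tree (σ.tgt g) :=
  σ.build g (Function.update (fun j => t.subAt hg j) i t')

theorem replace_L_nil {g : σ.Gen} (t : σ.Tree (σ.tgt g)) (hg : t.L [] = some g)
    (i : Fin (σ.src g).length) (t' : σ.Tree ((σ.src g).get i)) :
    (replace t hg i t').L [] = some g := rfl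

theorem replace_L_self {g : σ.Gen} (t : σ.Tree (σ.tgt g)) (hg : t.L [] = some g)
    (i : Fin (σ.src g).length) (t' : σ.Tree ((σ.src g).get i)) (q : List ℕ) :
    (replace t hg i t').L ((i : ℕ) :: q) = t'.L q := by
  rw [replace, build_L_cons_s10, dif_pos i.isLt]
  show (Function.update (fun j => t.subAt hg j) i t' i).L q = t'.L q
  rw [Function.update_self]

theorem replace_L_other {g : σ.Gen} (t : σ.Tree (σ.tgt g)) (hg : t.L [] = some g)
    (i : Fin (σ.src g).length) (t' : σ.Tree ((σ.src g).get i)) (j : ℕ)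
    (hji : j ≠ (i : ℕ)) (q : List ℕ) :
    (replace t hg i t').L (j :: q) = t.L (j :: q) := by
  rw [replace, build_L_cons_s10]
  by_cases hj : j < (σ.src g).length
  · rw [dif_pos hj]
    have hne : (⟨j, hj⟩ : Fin (σ.src g).length) ≠ i := by
      intro h; exact hji (by rw [← h])
    rw [Function.update_of_ne hne]
    rfl
  · rw [dif_neg hj, L_out_of_range t hg hj q]

theorem replace_infinite {g : σ.Gen} (t : σ.Tree (σ.tgt g)) (hg : t.L [] = some g)
    (i : Fin (σ.src g).length) (t' : σ.Tree ((σ.src g).get i)) (ht' : ¬ t'.IsFinite) :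
    ¬ (replace t hg i t').IsFinite := by
  intro hfin
  apply ht'
  have hinj : Function.Injective (fun q : List ℕ => (i : ℕ) :: q) := by
    intro a b hab; simpa using hab
  have hset : { q : List ℕ | (t'.L q).isSome } =
      (fun q : List ℕ => (i : ℕ) :: q) ⁻¹' { p : List ℕ | ((replace t hg i t').L p).isSome } := by
    ext q
    simp [replace_L_self t hg i t' q]
  rw [Tree.IsFinite, hset]
  exact hfin.preimage hinj.injOn

theorem replace_inj {g : σ.Gen} (t : σ.Tree (σ.tgt g)) (hg : t.L [] = some g)
    (i : Fin (σ.src g).length) {a b : σ.Tree ((σ.src g).get i)}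
    (h : replace t hg i a = replace t hg i b) : a = b := by
  apply Tree.ext'_s10
  funext q
  have := congrArg (fun u : σ.Tree (σ.tgt g) => u.L ((i : ℕ) :: q)) h
  simpa [replace_L_self] using this

theorem child_count {g : σ.Gen} (t : σ.Tree (σ.tgt g)) (hg : t.L [] = some g)
    (i : Fin (σ.src g).length)
    (hF : {u : σ.Tree (σ.tgt g) | ¬ u.IsFinite}.Finite) :
    {u : σ.Tree ((σ.src g).get i) | ¬ u.IsFinite}.Finite ∧
    {u : σ.Tree ((σ.src g).get i) | ¬ u.IsFinite}.ncard ≤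
      {u : σ.Tree (σ.tgt g) | ¬ u.IsFinite}.ncard := by
  have hmaps : (replace t hg i) '' {u : σ.Tree ((σ.src g).get i) | ¬ u.IsFinite} ⊆
      {u : σ.Tree (σ.tgt g) | ¬ u.IsFinite} := by
    rintro _ ⟨u, hu, rfl⟩
    exact replace_infinite t hg i u hu
  have hinj : Set.InjOn (replace t hg i) {u : σ.Tree ((σ.src g).get i) | ¬ u.IsFinite} :=
    fun a _ b _ h => replace_inj t hg i h
  have hAfin : {u : σ.Tree ((σ.src g).get i) | ¬ u.IsFinite}.Finite :=
    Set.Finite.of_finite_image (hF.subset hmaps) hinj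
  have hcard := Set.ncard_image_of_injOn hinj
  exact ⟨hAfin, hcard ▸ Set.ncard_le_ncard hmaps hF⟩

theorem child_count_lt_missing {g : σ.Gen} (t : σ.Tree (σ.tgt g)) (hg : t.L [] = some g)
    (i : Fin (σ.src g).length)
    (hF : {u : σ.Tree (σ.tgt g) | ¬ u.IsFinite}.Finite)
    (u : σ.Tree (σ.tgt g)) (hu : ¬ u.IsFinite) (hroot : u.L [] ≠ some g) :
    {u : σ.Tree ((σ.src g).get i) | ¬ u.IsFinite}.ncard <
      {u : σ.Tree (σ.tgt g) | ¬ u.IsFinite}.ncard := by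
  have hmaps : (replace t hg i) '' {v : σ.Tree ((σ.src g).get i) | ¬ v.IsFinite} ⊆
      {v : σ.Tree (σ.tgt g) | ¬ v.IsFinite} \ {u} := by
    rintro _ ⟨v, hv, rfl⟩
    refine ⟨replace_infinite t hg i v hv, ?_⟩
    intro h
    rw [Set.mem_singleton_iff] at h
    exact hroot (h ▸ replace_L_nil t hg i v)
  have hinj : Set.InjOn (replace t hg i) {v : σ.Tree ((σ.src g).get i) | ¬ v.IsFinite} :=
    fun a _ b _ h => replace_inj t hg i h
  have hcard := Set.ncard_image_of_injOn hinj
  calc {v : σ.Tree ((σ.src g).get i) | ¬ v.IsFinite}.ncard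
      = _ := hcard.symm
    _ ≤ ({v : σ.Tree (σ.tgt g) | ¬ v.IsFinite} \ {u}).ncard :=
        Set.ncard_le_ncard hmaps (hF.subset Set.diff_subset)
    _ < {v : σ.Tree (σ.tgt g) | ¬ v.IsFinite}.ncard :=
        Set.ncard_diff_singleton_lt_of_mem hu hF

theorem child_count_lt_two (htwo : ∀ s : σ.Srt, (σ.Gens s).Nontrivial)
    {g : σ.Gen} (t : σ.Tree (σ.tgt g)) (hg : t.L [] = some g)
    (i j : Fin (σ.src g).length) (hij : (i : ℕ) ≠ (j : ℕ))
    (hF : {u : σ.Tree (σ.tgt g) | ¬ u.IsFinite}.Finite)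
    (hA : {u : σ.Tree ((σ.src g).get i) | ¬ u.IsFinite}.Nonempty) :
    {u : σ.Tree ((σ.src g).get i) | ¬ u.IsFinite}.ncard <
      {u : σ.Tree (σ.tgt g) | ¬ u.IsFinite}.ncard := by
  obtain ⟨u₁, u₂, hu12⟩ := two_trees htwo ((σ.src g).get j)
  set A := {u : σ.Tree ((σ.src g).get i) | ¬ u.IsFinite} with hAdef
  set B := {u : σ.Tree (σ.tgt g) | ¬ u.IsFinite} with hBdef
  have hAfin : A.Finite := (child_count t hg i hF).1
  set f₁ := fun x : σ.Tree ((σ.src g).get i) => replace (replace t hg j u₁) rfl i x with hf₁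
  set f₂ := fun x : σ.Tree ((σ.src g).get i) => replace (replace t hg j u₂) rfl i x with hf₂
  have hLj : ∀ (x : σ.Tree ((σ.src g).get i)) (u : σ.Tree ((σ.src g).get j)) (q : List ℕ),
      (replace (replace t hg j u) rfl i x).L ((j : ℕ) :: q) = u.L q := by
    intro x u q
    rw [replace_L_other _ rfl i x (j : ℕ) (fun h => hij h.symm) q, replace_L_self]
  have hmaps : ∀ (u : σ.Tree ((σ.src g).get j)),
      (fun x : σ.Tree ((σ.src g).get i) => replace (replace t hg j u) rfl i x) '' A ⊆ B := by
    rintro u _ ⟨v, hv, rfl⟩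
    exact replace_infinite _ rfl i v hv
  have hinj : ∀ (u : σ.Tree ((σ.src g).get j)),
      Set.InjOn (fun x : σ.Tree ((σ.src g).get i) => replace (replace t hg j u) rfl i x) A :=
    fun u a _ b _ h => replace_inj _ rfl i h
  have hdisj : Disjoint (f₁ '' A) (f₂ '' A) := by
    rw [Set.disjoint_left]
    rintro _ ⟨a, ha, rfl⟩ ⟨b, hb, hba⟩
    apply hu12
    apply Tree.ext'_s10
    funext q
    have := congrArg (fun u : σ.Tree (σ.tgt g) => u.L ((j : ℕ) :: q)) hba
    simpa [hf₁, hf₂, hLj] using this.symm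
  have hunion : (f₁ '' A) ∪ (f₂ '' A) ⊆ B := Set.union_subset (hmaps u₁) (hmaps u₂)
  have hcard : (f₁ '' A).ncard + (f₂ '' A).ncard ≤ B.ncard := by
    rw [← Set.ncard_union_eq hdisj (hAfin.image _) (hAfin.image _)]
    exact Set.ncard_le_ncard hunion hF
  rw [Set.ncard_image_of_injOn (hinj u₁), Set.ncard_image_of_injOn (hinj u₂)] at hcard
  have hpos : 0 < A.ncard := (Set.ncard_pos hAfin).mpr hA
  omega

theorem depth_bound {s : σ.Srt} (t : σ.Tree s) (h : t.IsFinite) : ∃ d, t.DepthLE d := by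
  obtain ⟨d, hd⟩ := (h.image List.length).bddAbove
  exact ⟨d, fun p hp => hd ⟨p, hp, rfl⟩⟩

theorem subAt_depth {s : σ.Srt} (t : σ.Tree s) {g : σ.Gen} (hg : t.L [] = some g)
    (i : Fin (σ.src g).length) {d : ℕ} (h : t.DepthLE (d + 1)) :
    (t.subAt hg i).DepthLE d := by
  intro q hq
  have := h ((i : ℕ) :: q) hq
  simpa using this

theorem ground_term_of_depth : ∀ d : ℕ, ∀ {s : σ.Srt} (t : σ.Tree s), t.IsFinite →
    t.DepthLE d → ∃ τ : σ.Tm s, τ.fv = ∅ ∧ ∀ ρ : σ.Val, τ.eval ρ = t := by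
  intro d
  induction d with
  | zero =>
    intro s t hfin hd
    obtain ⟨g, hg, hs⟩ := t.root
    subst hs
    have harity : ¬ 0 < (σ.src g).length := by
      intro h0
      have h1 : (t.L ([] ++ [0])).isSome := (t.isLab.2.1 [] g hg 0).2 h0
      have := hd [0] (by simpa using h1)
      simp at this
    refine ⟨.app g (fun i => absurd i.isLt (by have := i.isLt; omega)), ?_, ?_⟩
    · show (⋃ i : Fin (σ.src g).length, _) = ∅
      apply Set.iUnion_eq_empty.mpr
      intro i
      exact absurd i.isLt (by have := i.isLt; omega)
    · intro ρ
      show σ.build g _ = t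
      apply Tree.ext'_s10
      funext p
      cases p with
      | nil => simpa [build_L_nil] using hg.symm
      | cons i q =>
        rw [build_L_cons_s10, dif_neg (by omega), L_out_of_range t hg (by omega) q]
  | succ d ih =>
    intro s t hfin hd
    obtain ⟨g, hg, hs⟩ := t.root
    subst hs
    have hch := fun i : Fin (σ.src g).length =>
      ih (t.subAt hg i) (subAt_finite t hg i hfin) (subAt_depth t hg i hd)
    choose τs hfv heval using hch
    refine ⟨.app g τs, ?_, ?_⟩
    · show (⋃ i, (τs i).fv) = ∅
      simp [hfv]
    · intro ρ
      show σ.build g (fun i => (τs i).eval ρ) = t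
      have heq : (fun i => (τs i).eval ρ) = fun i => t.subAt hg i :=
        funext fun i => heval i ρ
      rw [heq]
      exact eta t hg

theorem ground_term {s : σ.Srt} (t : σ.Tree s) (hfin : t.IsFinite) :
    ∃ τ : σ.Tm s, τ.fv = ∅ ∧ ∀ ρ : σ.Val, τ.eval ρ = t := by
  obtain ⟨d, hd⟩ := depth_bound t hfin
  exact ground_term_of_depth d t hfin hd

/-- The "forced unary chain" of sorts continues for `k` more steps from `s`:
all infinite trees of the current sort share the same unary root generator. -/
def ChainHolds (σ : Sig) : ℕ → σ.Srt → Prop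
  | 0, _ => True
  | (k+1), s => ∃ g : σ.Gen, (∀ u : σ.Tree s, ¬ u.IsFinite → u.L [] = some g) ∧
      ∃ h : 0 < (σ.src g).length, (σ.src g).length = 1 ∧
        ChainHolds σ k ((σ.src g).get ⟨0, h⟩)

/-- If the forced unary chain continues forever, all infinite trees agree everywhere. -/
theorem det : ∀ (p : List ℕ) (s' : σ.Srt), (∀ k, ChainHolds σ k s') →
    ∀ u v : σ.Tree s', ¬ u.IsFinite → ¬ v.IsFinite → u.L p = v.L p := by
  intro p
  induction p with
  | nil =>
    intro s' hch u v hu hv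
    obtain ⟨g, hall, _⟩ := hch 1
    rw [hall u hu, hall v hv]
  | cons i q ih =>
    intro s' hch u v hu hv
    obtain ⟨g, hall, h0, h1, -⟩ := hch 1
    have hgu := hall u hu
    have hgv := hall v hv
    by_cases hi : i = 0
    · subst hi
      have hchild : ∀ k, ChainHolds σ k ((σ.src g).get ⟨0, h0⟩) := by
        intro k
        obtain ⟨g', hall', h0', h1', hck⟩ := hch (k + 1)
        have hgg : g' = g := by
          have h := hall' u hu
          rw [hgu] at h
          injection h with h
          exact h.symm
        subst hgg
        exact hck
      have hsu : ¬ (u.subAt hgu ⟨0, h0⟩).IsFinite := by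
        obtain ⟨i', hi'⟩ := exists_infinite_child u hgu hu
        have hieq : i' = ⟨0, h0⟩ := Fin.ext (by have := i'.isLt; omega)
        rwa [hieq] at hi'
      have hsv : ¬ (v.subAt hgv ⟨0, h0⟩).IsFinite := by
        obtain ⟨i', hi'⟩ := exists_infinite_child v hgv hv
        have hieq : i' = ⟨0, h0⟩ := Fin.ext (by have := i'.isLt; omega)
        rwa [hieq] at hi'
      exact ih _ hchild _ _ hsu hsv
    · rw [L_out_of_range u hgu (by omega) q, L_out_of_range v hgv (by omega) q]

theorem term_of_children {g : σ.Gen} (t : σ.Tree (σ.tgt g)) (hg : t.L [] = some g)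
    (h : ∀ i : Fin (σ.src g).length, ∃ τ : σ.Tm ((σ.src g).get i),
      (τ.fv ⊆ { x : (s' : σ.Srt) × ℕ | x.1 ∈ Sig.S1I σ ∧ x.2 = 0 }) ∧
      ∀ ρ : σ.Val, (∀ s' ∈ Sig.S1I σ, ¬ (ρ s' 0).IsFinite) → τ.eval ρ = t.subAt hg i) :
    ∃ τ : σ.Tm (σ.tgt g),
      (τ.fv ⊆ { x : (s' : σ.Srt) × ℕ | x.1 ∈ Sig.S1I σ ∧ x.2 = 0 }) ∧
      ∀ ρ : σ.Val, (∀ s' ∈ Sig.S1I σ, ¬ (ρ s' 0).IsFinite) → τ.eval ρ = t := by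
  choose τs hfv heval using h
  refine ⟨.app g τs, ?_, ?_⟩
  · show (⋃ i, (τs i).fv) ⊆ _
    exact Set.iUnion_subset hfv
  · intro ρ hρ
    show σ.build g (fun i => (τs i).eval ρ) = t
    have heq : (fun i => (τs i).eval ρ) = fun i => t.subAt hg i :=
      funext fun i => heval i ρ hρ
    rw [heq]
    exact eta t hg

theorem var_case {s : σ.Srt} (hF : {u : σ.Tree s | ¬ u.IsFinite}.Finite)
    (h1 : {u : σ.Tree s | ¬ u.IsFinite}.ncard = 1) (t : σ.Tree s) (ht : ¬ t.IsFinite) :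
    ∃ τ : σ.Tm s,
      (τ.fv ⊆ { x : (s' : σ.Srt) × ℕ | x.1 ∈ Sig.S1I σ ∧ x.2 = 0 }) ∧
      ∀ ρ : σ.Val, (∀ s' ∈ Sig.S1I σ, ¬ (ρ s' 0).IsFinite) → τ.eval ρ = t := by
  obtain ⟨a, ha⟩ := Set.ncard_eq_one.mp h1
  have hamem : ¬ a.IsFinite := by
    have : a ∈ {u : σ.Tree s | ¬ u.IsFinite} := by rw [ha]; exact rfl
    exact this
  have hs1 : s ∈ Sig.S1I σ := by
    refine ⟨a, hamem, ?_⟩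
    intro y hy
    have : y ∈ {u : σ.Tree s | ¬ u.IsFinite} := hy
    rw [ha] at this
    exact this
  refine ⟨.var s 0, ?_, ?_⟩
  · intro x hx
    have hx' : x ∈ ({⟨s, 0⟩} : Set ((s' : σ.Srt) × ℕ)) := hx
    rw [Set.mem_singleton_iff] at hx'
    subst hx'
    exact ⟨hs1, rfl⟩
  · intro ρ hρ
    show ρ s 0 = t
    have h2 : ρ s 0 ∈ {u : σ.Tree s | ¬ u.IsFinite} := hρ s hs1
    have h3 : t ∈ {u : σ.Tree s | ¬ u.IsFinite} := ht
    rw [ha, Set.mem_singleton_iff] at h2 h3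
    rw [h2, h3]

theorem main (htwo : ∀ s : σ.Srt, (σ.Gens s).Nontrivial) :
    ∀ N : ℕ, ∀ s : σ.Srt, {u : σ.Tree s | ¬ u.IsFinite}.Finite →
      {u : σ.Tree s | ¬ u.IsFinite}.ncard ≤ N →
      ∀ t : σ.Tree s, ¬ t.IsFinite →
      ∃ τ : σ.Tm s,
        (τ.fv ⊆ { x : (s' : σ.Srt) × ℕ | x.1 ∈ Sig.S1I σ ∧ x.2 = 0 }) ∧
        ∀ ρ : σ.Val, (∀ s' ∈ Sig.S1I σ, ¬ (ρ s' 0).IsFinite) → τ.eval ρ = t := by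
  intro N
  induction N using Nat.strong_induction_on with
  | _ N IH =>
  intro s hF hle t ht
  rcases eq_or_ne ({u : σ.Tree s | ¬ u.IsFinite}.ncard) 1 with h1 | h1
  · exact var_case hF h1 t ht
  · -- at least two infinite trees of sort `s`: the forced chain must stop
    have hk : ∃ k, ¬ ChainHolds σ k s := by
      by_contra hall
      push_neg at hall
      have hsub : {u : σ.Tree s | ¬ u.IsFinite} ⊆ {t} := by
        intro u hu
        have : u = t := Tree.ext'_s10 (funext fun p => det p s hall u t hu ht)
        simp [this]
      have hcard := Set.ncard_le_ncard hsub (Set.finite_singleton t)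
      rw [Set.ncard_singleton] at hcard
      have hpos : 0 < {u : σ.Tree s | ¬ u.IsFinite}.ncard :=
        (Set.ncard_pos hF).mpr ⟨t, ht⟩
      omega
    obtain ⟨k, hk⟩ := hk
    clear h1
    revert s t hF hle ht hk
    induction k with
    | zero => intro s hF hle t ht hk; exact absurd trivial hk
    | succ k ihk =>
      intro s hF hle t ht hk
      obtain ⟨g, hg, hs''⟩ := t.root
      subst hs''
      obtain ⟨i₀, hi₀⟩ := exists_infinite_child t hg ht
      apply term_of_children t hg
      intro i
      by_cases hfin_i : (t.subAt hg i).IsFinite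
      · obtain ⟨τ, hτ1, hτ2⟩ := ground_term _ hfin_i
        exact ⟨τ, by simp [hτ1], fun ρ _ => hτ2 ρ⟩
      · rcases Nat.lt_or_ge (σ.src g).length 2 with hlen | hlen
        · -- arity exactly 1
          have h1len : (σ.src g).length = 1 := by have := i.isLt; omega
          by_cases hAll : ∀ u : σ.Tree (σ.tgt g), ¬ u.IsFinite → u.L [] = some g
          · -- chain continues for one step: use the inner induction hypothesis
            have h0 : 0 < (σ.src g).length := by omega
            have hch0 : ¬ ChainHolds σ k ((σ.src g).get ⟨0, h0⟩) := by
              intro hc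
              exact hk ⟨g, hAll, h0, h1len, hc⟩
            have hieq : i = ⟨0, h0⟩ := Fin.ext (by have := i.isLt; omega)
            have hch' : ¬ ChainHolds σ k ((σ.src g).get i) := by
              rw [hieq]; exact hch0
            obtain ⟨hfin_c, hle_c⟩ := child_count t hg i hF
            exact ihk ((σ.src g).get i) hfin_c (le_trans hle_c hle) (t.subAt hg i) hfin_i hch'
          · push_neg at hAll
            obtain ⟨u, hu, huroot⟩ := hAll
            have hlt := child_count_lt_missing t hg i hF u hu huroot
            obtain ⟨hfin_c, _⟩ := child_count t hg i hF
            exact IH _ (lt_of_lt_of_le hlt hle) _ hfin_c le_rfl _ hfin_i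
        · -- arity at least 2
          have hj : ∃ j : Fin (σ.src g).length, (j : ℕ) ≠ (i : ℕ) := by
            rcases eq_or_ne (i : ℕ) 0 with h | h
            · exact ⟨⟨1, by omega⟩, by simp [h]⟩
            · exact ⟨⟨0, by omega⟩, by simp [Ne.symm h]⟩
          obtain ⟨j, hj⟩ := hj
          have hlt := child_count_lt_two htwo t hg i j (fun h => hj h.symm) hF ⟨_, hfin_i⟩
          obtain ⟨hfin_c, _⟩ := child_count t hg i hF
          exact IH _ (lt_of_lt_of_le hlt hle) _ hfin_c le_rfl _ hfin_i

end Sig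

/-- Assume every sort has at least two generators. If `s` has at
least one but only finitely many infinite trees, then every infinite tree of sort
`s` is the value of a finite term whose variables are among `{u_{s'} | s' ∈ S_1I}`,
under any valuation sending each `u_{s'}` to the unique infinite tree of sort `s'`
(a valuation assigning an infinite tree to each such variable necessarily assigns
the unique infinite tree). -/
theorem infinite_trees_are_term_values (σ : Sig)
    (htwo : ∀ s : σ.Srt, (σ.Gens s).Nontrivial)
    (s : σ.Srt) (hone : ∃ t : σ.Tree s, ¬ t.IsFinite) (hfin : s ∈ Sig.SFI σ) :
    ∀ t : σ.Tree s, ¬ t.IsFinite →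
      ∃ τ : σ.Tm s,
        (Sig.Tm.fv τ ⊆ { x : (s' : σ.Srt) × ℕ | x.1 ∈ Sig.S1I σ ∧ x.2 = 0 }) ∧
        ∀ ρ : σ.Val, (∀ s' ∈ Sig.S1I σ, ¬ (ρ s' 0).IsFinite) →
          Sig.Tm.eval ρ τ = t := by
  intro t ht
  exact Sig.main htwo ({u : σ.Tree s | ¬ u.IsFinite}.ncard) s hfin le_rfl t ht
end
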